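/- Let (𝒰, 𝒜, μ) be a σ-finite measure space, g : 𝒰 → ℝ^d measurable, and p : ℝ^d → [0,∞) a bounded measurable probability density on ℝ^d. Assume there exist disjoint measurable sets U₁, U₂ ⊆ 𝒰 with 0 < μ(U₁) = μ(U₂) < ∞ and a measurable bijection T : U₁ → U₂ that is measure preserving (the pushforward under T of μ restricted to U₁ equals μ restricted to U₂) and satisfies g(T(u)) = g(u) for all u ∈ U₁. Define δ := 1_{U₁} − 1_{U₂}. Then δ is μ-integrable, essentially bounded, and not μ-almost-everywhere zero, yet for every w ∈ ℝ^d the function u ↦ p(w − g(u)) δ(u) is μ-integrable with ∫_{𝒰} p(w − g(u)) δ(u) μ(du) = 0. Consequently, the error mechanism {u ↦ p(w − g(u))} is neither L1-complete nor L∞-complete. -/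

import Mathlib

open MeasureTheory

/-- **A non-injective additive noise model yields a non-complete error mechanism.**
If `g : 𝒰 → ℝ^d` identifies two disjoint sets `U₁, U₂` of equal positive finite measure via
a measure-preserving bijection `T : U₁ → U₂` with `g ∘ T = g` on `U₁`, then
`δ = 1_{U₁} − 1_{U₂}` is integrable, essentially bounded and not a.e. zero, yet
`∫ p (w − g u) δ(u) dμ(u) = 0` for every `w`; hence `{u ↦ p (w − g u)}` is neither
L1-complete nor L∞-complete. -/
theorem non_injective_error_mechanism_not_complete
    {𝒰 : Type*} [MeasurableSpace 𝒰] (μ : Measure 𝒰) [SigmaFinite μ]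
    (d : ℕ)
    (g : 𝒰 → EuclideanSpace ℝ (Fin d)) (hg : Measurable g)
    (p : EuclideanSpace ℝ (Fin d) → ℝ)
    (hp_meas : Measurable p)
    (hp_nonneg : ∀ x, 0 ≤ p x)
    (hp_bdd : ∃ C : ℝ, ∀ x, p x ≤ C)
    (hp_dens : ∫ x, p x = 1)
    (U₁ U₂ : Set 𝒰) (hU₁ : MeasurableSet U₁) (hU₂ : MeasurableSet U₂)
    (hdisj : Disjoint U₁ U₂)
    (hpos : 0 < μ U₁) (heq : μ U₁ = μ U₂) (hfin : μ U₂ < ⊤)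
    (T : 𝒰 → 𝒰) (hT_meas : Measurable T) (hT_bij : Set.BijOn T U₁ U₂)
    (hT_mp : Measure.map T (μ.restrict U₁) = μ.restrict U₂)
    (hgT : ∀ u ∈ U₁, g (T u) = g u) :
    (Integrable
        (fun u => Set.indicator U₁ (fun _ => (1 : ℝ)) u
          - Set.indicator U₂ (fun _ => (1 : ℝ)) u) μ) ∧
    (∃ C : ℝ, ∀ᵐ u ∂μ, |Set.indicator U₁ (fun _ => (1 : ℝ)) u
          - Set.indicator U₂ (fun _ => (1 : ℝ)) u| ≤ C) ∧
    ¬ ((fun u => Set.indicator U₁ (fun _ => (1 : ℝ)) u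
          - Set.indicator U₂ (fun _ => (1 : ℝ)) u) =ᵐ[μ] 0) ∧
    (∀ w : EuclideanSpace ℝ (Fin d),
      Integrable
        (fun u => p (w - g u) * (Set.indicator U₁ (fun _ => (1 : ℝ)) u
          - Set.indicator U₂ (fun _ => (1 : ℝ)) u)) μ ∧
      ∫ u, p (w - g u) * (Set.indicator U₁ (fun _ => (1 : ℝ)) u
          - Set.indicator U₂ (fun _ => (1 : ℝ)) u) ∂μ = 0) := by

  have hfin1 : μ U₁ < ⊤ := heq ▸ hfin
  have hi1 : Integrable (Set.indicator U₁ (fun _ => (1 : ℝ))) μ :=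
    (integrable_indicator_iff hU₁).2 (integrableOn_const hfin1.ne)
  have hi2 : Integrable (Set.indicator U₂ (fun _ => (1 : ℝ))) μ :=
    (integrable_indicator_iff hU₂).2 (integrableOn_const hfin.ne)
  have hδint : Integrable
      (fun u => Set.indicator U₁ (fun _ => (1 : ℝ)) u
        - Set.indicator U₂ (fun _ => (1 : ℝ)) u) μ := hi1.sub hi2
  refine ⟨hδint, ⟨2, ?_⟩, ?_, ?_⟩
  · filter_upwards with u
    have h1 : |Set.indicator U₁ (fun _ => (1 : ℝ)) u| ≤ 1 := by
      by_cases h : u ∈ U₁ <;> simp [Set.indicator_apply, h]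
    have h2 : |Set.indicator U₂ (fun _ => (1 : ℝ)) u| ≤ 1 := by
      by_cases h : u ∈ U₂ <;> simp [Set.indicator_apply, h]
    calc |Set.indicator U₁ (fun _ => (1 : ℝ)) u - Set.indicator U₂ (fun _ => (1 : ℝ)) u|
        ≤ |Set.indicator U₁ (fun _ => (1 : ℝ)) u| + |Set.indicator U₂ (fun _ => (1 : ℝ)) u| :=
          abs_sub _ _
      _ ≤ 2 := by linarith
  · intro h
    have hsub : U₁ ⊆ {u | (fun u => Set.indicator U₁ (fun _ => (1 : ℝ)) u
        - Set.indicator U₂ (fun _ => (1 : ℝ)) u) u ≠ (0 : 𝒰 → ℝ) u} := by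
      intro u hu
      have hu2 : u ∉ U₂ := fun h2 => (hdisj.le_bot ⟨hu, h2⟩ : u ∈ (⊥ : Set 𝒰))
      simp [Set.indicator_apply, hu, hu2]
    have : μ U₁ = 0 := measure_mono_null hsub h
    exact absurd this hpos.ne'
  · intro w
    have hCw : ∃ C, ∀ u, ‖p (w - g u)‖ ≤ C := by
      obtain ⟨C, hC⟩ := hp_bdd
      exact ⟨C, fun u => by rw [Real.norm_eq_abs, abs_of_nonneg (hp_nonneg _)]; exact hC _⟩
    have hmeas : AEStronglyMeasurable (fun u => p (w - g u)) μ :=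
      (hp_meas.comp (measurable_const.sub hg)).aestronglyMeasurable
    have hint : Integrable
        (fun u => p (w - g u) * (Set.indicator U₁ (fun _ => (1 : ℝ)) u
          - Set.indicator U₂ (fun _ => (1 : ℝ)) u)) μ :=
      hδint.bdd_mul hmeas (ae_of_all _ hCw.choose_spec)
    refine ⟨hint, ?_⟩
    have hsplit : (fun u => p (w - g u) * (Set.indicator U₁ (fun _ => (1 : ℝ)) u
          - Set.indicator U₂ (fun _ => (1 : ℝ)) u))
        = fun u => Set.indicator U₁ (fun u => p (w - g u)) u
          - Set.indicator U₂ (fun u => p (w - g u)) u := by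
      funext u
      by_cases h1 : u ∈ U₁ <;> by_cases h2 : u ∈ U₂ <;>
        simp [Set.indicator_apply, h1, h2, mul_sub]
    rw [hsplit]
    have hint1 : Integrable (Set.indicator U₁ (fun u => p (w - g u))) μ :=
      hi1.bdd_mul hmeas (ae_of_all _ hCw.choose_spec) |>.congr (by
        filter_upwards with u
        by_cases h : u ∈ U₁ <;> simp [Set.indicator_apply, h])
    have h2int : Integrable (Set.indicator U₂ (fun u => p (w - g u))) μ :=
      hi2.bdd_mul hmeas (ae_of_all _ hCw.choose_spec) |>.congr (by
        filter_upwards with u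
        by_cases h : u ∈ U₂ <;> simp [Set.indicator_apply, h])
    rw [integral_sub hint1 h2int, integral_indicator hU₁, integral_indicator hU₂]
    have key : ∫ u, p (w - g u) ∂(μ.restrict U₂) = ∫ u, p (w - g u) ∂(μ.restrict U₁) := by
      have hm2 : AEStronglyMeasurable (fun u => p (w - g u)) (Measure.map T (μ.restrict U₁)) :=
        hT_mp.symm ▸ hmeas.restrict
      rw [← hT_mp, integral_map hT_meas.aemeasurable hm2]
      · refine integral_congr_ae ?_
        filter_upwards [ae_restrict_mem hU₁] with u hu
        rw [hgT u hu]
    rw [key, sub_self]
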